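/- Pigeonhole lemma: let X, Y be finite alphabets with |X| > |Y| and let f : X^ω → Y^ω preserve the beginning of words. Then for every k ≥ 0 there exist a finite word w ∈ X* and infinite words u, u' ∈ X^ω such that u and u' differ in their first letter, while f(wu) and f(wu') agree on their first |w| + k letters. -/

import Mathlib

/-- The infinite word obtained by prepending the finite word `w` to `u`. -/
def prepend {X : Type*} (w : List X) (u : ℕ → X) : ℕ → X :=
  fun i => if h : i < w.length then w.get ⟨i, h⟩ else u (i - w.length)

lemma exists_pow_pow {a b : ℕ} (hb : 1 ≤ b) (hab : b < a) (k : ℕ) :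
    ∃ n, b ^ (n + k) < a ^ n := by
  have hbq : (0:ℚ) < (b:ℚ) := by exact_mod_cast hb
  have h1 : (1:ℚ) < (a:ℚ) / b := by
    rw [lt_div_iff₀ hbq]; exact_mod_cast by simpa using hab
  obtain ⟨n, hn⟩ := pow_unbounded_of_one_lt ((b:ℚ) ^ k) h1
  refine ⟨n, ?_⟩
  have : ((b:ℚ)) ^ (n + k) < (a:ℚ) ^ n := by
    have hbn : (0:ℚ) < (b:ℚ) ^ n := pow_pos hbq n
    rw [div_pow] at hn
    calc ((b:ℚ)) ^ (n + k) = (b:ℚ)^k * (b:ℚ)^n := by ring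
    _ < ((a:ℚ)^n / (b:ℚ)^n) * (b:ℚ)^n := by exact mul_lt_mul_of_pos_right hn hbn
    _ = (a:ℚ)^n := by field_simp
  exact_mod_cast this

/-- Pigeonhole lemma: if `|X| > |Y|` and `f : X^ω → Y^ω` preserves the beginning of
words, then for every `k` there are a finite word `w` and infinite words `u, u'`
differing in their first letter such that `f(wu)` and `f(wu')` agree on their first
`|w| + k` letters. -/
theorem stmt15 {X Y : Type*} [Fintype X] [Fintype Y]
    (hcard : Fintype.card Y < Fintype.card X)
    (f : (ℕ → X) → ℕ → Y)
    (hf : ∀ (u v : ℕ → X) (j : ℕ), (∀ i < j, u i = v i) → ∀ i < j, f u i = f v i)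
    (k : ℕ) :
    ∃ (w : List X) (u u' : ℕ → X), u 0 ≠ u' 0 ∧
      ∀ i < w.length + k, f (prepend w u) i = f (prepend w u') i := by
  clear hf
  classical
  have hX : Nonempty X := Fintype.card_pos_iff.mp (lt_of_le_of_lt (Nat.zero_le _) hcard)
  obtain ⟨c⟩ := hX
  have hY : 1 ≤ Fintype.card Y := by
    rcases Nat.eq_zero_or_pos (Fintype.card Y) with h | h
    · exact ((Fintype.card_eq_zero_iff.mp h).elim (f (fun _ => c) 0))
    · exact h
  obtain ⟨n, hn⟩ := exists_pow_pow hY hcard k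
  -- extend a finite word of length n by c's
  set E : (Fin n → X) → (ℕ → X) := fun v j => if h : j < n then v ⟨j, h⟩ else c with hE
  set F : (Fin n → X) → (Fin (n + k) → Y) := fun v i => f (E v) i with hF
  have hcard2 : Fintype.card (Fin (n + k) → Y) < Fintype.card (Fin n → X) := by
    simpa [Fintype.card_fun] using hn
  obtain ⟨v, v', hne, heq⟩ := Fintype.exists_ne_map_eq_of_card_lt F hcard2
  have hdiff : ∃ j, E v j ≠ E v' j := by
    obtain ⟨i, hi⟩ := Function.ne_iff.mp hne
    exact ⟨i, by simp [hE, i.isLt, hi]⟩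
  set m := Nat.find hdiff with hm
  have hmspec : E v m ≠ E v' m := Nat.find_spec hdiff
  have hmmin : ∀ j < m, E v j = E v' j := fun j hj => not_not.mp (Nat.find_min hdiff hj)
  have hmn : m < n := by
    by_contra h
    exact hmspec (by simp [hE, not_lt.mp h, Nat.not_lt.mpr (not_lt.mp h)])
  refine ⟨List.ofFn (fun i : Fin m => E v i), fun i => E v (m + i), fun i => E v' (m + i), ?_, ?_⟩
  · simpa using hmspec
  · have hlen : (List.ofFn (fun i : Fin m => E v i)).length = m := List.length_ofFn
    have hprep : ∀ (z : Fin n → X), (∀ j < m, E v j = E z j) →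
        prepend (List.ofFn (fun i : Fin m => E v i)) (fun i => E z (m + i)) = E z := by
      intro z hz
      funext j
      simp only [prepend, hlen]
      split_ifs with h
      · rw [List.get_ofFn]; simpa using hz j h
      · congr 1; omega
    rw [hprep v (fun _ _ => rfl), hprep v' hmmin, hlen]
    intro i hi
    have : i < n + k := by omega
    exact congrFun heq ⟨i, this⟩
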